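/- Let i, j be positive integers with gcd(i, j) = 1, let λ, μ be integers with 1 ≤ λ ≤ j−1, 1 ≤ μ ≤ i−1 and λ ≡ μ (mod 2), and let u, v be integers with i·u + j·v = 1. Set k₁ = λiu + μjv and k₂ = λiu − μjv, and set t₁ = cos(k₁π/(ij)), t₂ = cos(k₂π/(ij)). Then t₁ ≠ t₂, and for m = 1, 2 one has T_i(t_m) = cos(λπ/j) and T_j(t_m) = cos(μπ/i); that is, the parametrization α = (T_i, T_j) sends the two distinct parameters t₁, t₂ to the same node of the curve T_i(y) − T_j(x) = 0. -/

import Mathlib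

open Polynomial Polynomial.Chebyshev Real

private lemma cos_shift (n : ℕ) (hn : 0 < n) (k a m : ℤ) (h : k = a + (n : ℤ) * (2 * m)) :
    Real.cos ((k : ℝ) * π / n) = Real.cos ((a : ℝ) * π / n) := by
  have hn' : (n : ℝ) ≠ 0 := by positivity
  have : (k : ℝ) * π / n = (a : ℝ) * π / n + (m : ℝ) * (2 * π) := by
    field_simp
    push_cast [h]
    ring
  rw [this]
  exact_mod_cast Real.cos_add_int_mul_two_pi _ m

theorem chebyshev_curve_node_preimages (i j : ℕ) (hi : 0 < i) (hj : 0 < j)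
    (hgcd : Nat.gcd i j = 1)
    (lam mu : ℤ) (hlam1 : 1 ≤ lam) (hlam2 : lam ≤ (j : ℤ) - 1)
    (hmu1 : 1 ≤ mu) (hmu2 : mu ≤ (i : ℤ) - 1) (hparity : lam % 2 = mu % 2)
    (u v : ℤ) (huv : (i : ℤ) * u + (j : ℤ) * v = 1)
    (k₁ k₂ : ℤ) (hk₁ : k₁ = lam * i * u + mu * j * v) (hk₂ : k₂ = lam * i * u - mu * j * v)
    (t₁ t₂ : ℝ) (ht₁ : t₁ = Real.cos ((k₁ : ℝ) * π / (i * j)))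
    (ht₂ : t₂ = Real.cos ((k₂ : ℝ) * π / (i * j))) :
    t₁ ≠ t₂ ∧
    (T ℝ i).eval t₁ = Real.cos ((lam : ℝ) * π / j) ∧
    (T ℝ j).eval t₁ = Real.cos ((mu : ℝ) * π / i) ∧
    (T ℝ i).eval t₂ = Real.cos ((lam : ℝ) * π / j) ∧
    (T ℝ j).eval t₂ = Real.cos ((mu : ℝ) * π / i) := by
  have hiR : (i : ℝ) ≠ 0 := by positivity
  have hjR : (j : ℝ) ≠ 0 := by positivity
  obtain ⟨c, hc⟩ : ∃ c : ℤ, mu - lam = 2 * c := ⟨(mu - lam) / 2, by omega⟩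
  obtain ⟨d, hd⟩ : ∃ d : ℤ, mu + lam = 2 * d := ⟨(mu + lam) / 2, by omega⟩
  have angle : ∀ (n m : ℕ) (k : ℤ), (n : ℝ) ≠ 0 → (m : ℝ) ≠ 0 →
      ((n : ℤ) : ℝ) * ((k : ℝ) * π / ((n : ℝ) * (m : ℝ))) = (k : ℝ) * π / (m : ℝ) := by
    intro n m k hn hm
    push_cast
    field_simp
  have e1 : (T ℝ i).eval t₁ = Real.cos ((lam : ℝ) * π / j) := by
    rw [ht₁, T_real_cos, angle i j k₁ hiR hjR]
    exact cos_shift j hj k₁ lam (v * c) (by linear_combination hk₁ + lam * huv + (j * v) * hc)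
  have e2 : (T ℝ j).eval t₁ = Real.cos ((mu : ℝ) * π / i) := by
    rw [ht₁, show (i : ℝ) * (j : ℝ) = (j : ℝ) * (i : ℝ) by ring, T_real_cos,
      angle j i k₁ hjR hiR]
    exact cos_shift i hi k₁ mu (-(u * c)) (by linear_combination hk₁ + mu * huv - (i * u) * hc)
  have e3 : (T ℝ i).eval t₂ = Real.cos ((lam : ℝ) * π / j) := by
    rw [ht₂, T_real_cos, angle i j k₂ hiR hjR]
    exact cos_shift j hj k₂ lam (-(v * d)) (by linear_combination hk₂ + lam * huv - (j * v) * hd)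
  have e4 : (T ℝ j).eval t₂ = Real.cos ((mu : ℝ) * π / i) := by
    rw [ht₂, show (i : ℝ) * (j : ℝ) = (j : ℝ) * (i : ℝ) by ring, T_real_cos,
      angle j i k₂ hjR hiR]
    have := cos_shift i hi k₂ (-mu) (u * d) (by linear_combination hk₂ - mu * huv + (i * u) * hd)
    rw [this]
    rw [show ((-mu : ℤ) : ℝ) * π / i = -((mu : ℝ) * π / i) by push_cast; ring, Real.cos_neg]
  refine ⟨?_, e1, e2, e3, e4⟩
  intro hteq
  rw [ht₁, ht₂, Real.cos_eq_cos_iff] at hteq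
  have hijR : ((i : ℝ) * (j : ℝ)) ≠ 0 := mul_ne_zero hiR hjR
  obtain ⟨m, hm | hm⟩ := hteq
  · -- k₂ = 2 m i j + k₁  ⇒  i ∣ mu, contradiction
    have hZ : (k₂ : ℤ) = 2 * m * (i * j) + k₁ := by
      have : (k₂ : ℝ) = 2 * (m : ℝ) * ((i : ℝ) * (j : ℝ)) + k₁ := by
        field_simp at hm
        have h' : (k₂ : ℝ) * π = (2 * (m : ℝ) * ((i : ℝ) * (j : ℝ)) + k₁) * π := by
          linear_combination π * hm
        exact mul_right_cancel₀ Real.pi_ne_zero h'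
      exact_mod_cast this
    have hdvd : (i : ℤ) ∣ mu := by
      have hmujv : mu * (j * v) = -(m * (i * j)) := by linarith [hk₁ ▸ hk₂ ▸ hZ]
      refine ⟨mu * u - m * j, ?_⟩
      have : mu * ((i : ℤ) * u + j * v) = mu := by rw [huv]; ring
      nlinarith [this, hmujv]
    have := Int.le_of_dvd (by omega) hdvd
    omega
  · -- k₂ = 2 m i j - k₁  ⇒  j ∣ lam, contradiction
    have hZ : (k₂ : ℤ) = 2 * m * (i * j) - k₁ := by
      have : (k₂ : ℝ) = 2 * (m : ℝ) * ((i : ℝ) * (j : ℝ)) - k₁ := by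
        field_simp at hm
        have h' : (k₂ : ℝ) * π = (2 * (m : ℝ) * ((i : ℝ) * (j : ℝ)) - k₁) * π := by
          linear_combination π * hm
        exact mul_right_cancel₀ Real.pi_ne_zero h'
      exact_mod_cast this
    have hdvd : (j : ℤ) ∣ lam := by
      have hlamiu : lam * ((i : ℤ) * u) = m * (i * j) := by linarith [hk₁ ▸ hk₂ ▸ hZ]
      refine ⟨lam * v - (-(m * i)), ?_⟩
      have : lam * ((i : ℤ) * u + j * v) = lam := by rw [huv]; ring
      nlinarith [this, hlamiu]
    have := Int.le_of_dvd (by omega) hdvd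
    omega
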